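/- Let Q₂(F) = |F_sym|² + β tr²(F) with β > -1/2, let a ∈ ℝ, and let Ā = a·I₂. Then the set of minimizers of F ↦ Q₂(F − Ā) over the set 𝓕 = {F ∈ Sym(2) : det F = 0} equals { 𝔯 n ⊗ n : n ∈ ℝ², |n| = 1 } where 𝔯 = a(1+2β)/(1+β). Equivalently, it equals { ρᵀ diag(𝔯, 0) ρ : ρ ∈ SO(2) }. -/

import Mathlib

open Matrix

private lemma find_uv (r p q s : ℝ) (hdet : p * q = s ^ 2) (htr : p + q = r) :
    ∃ u v : ℝ, u ^ 2 + v ^ 2 = 1 ∧ p = r * u ^ 2 ∧ s = r * (u * v) ∧ q = r * v ^ 2 := by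
  by_cases hr0 : r = 0
  · subst hr0
    have hps : p ^ 2 + s ^ 2 = 0 := by linear_combination p * htr - hdet
    have hp0 : p = 0 := by
      have h1 : p ^ 2 = 0 := le_antisymm (by nlinarith [sq_nonneg s]) (sq_nonneg p)
      exact pow_eq_zero_iff two_ne_zero |>.mp h1
    have hs0 : s = 0 := by
      have h1 : s ^ 2 = 0 := le_antisymm (by nlinarith [sq_nonneg p]) (sq_nonneg s)
      exact pow_eq_zero_iff two_ne_zero |>.mp h1
    exact ⟨1, 0, by ring, by simp [hp0], by simp [hs0], by simp; linarith⟩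
  · by_cases hp0 : p = 0
    · have hs0 : s = 0 := by
        have h1 : s ^ 2 = 0 := by rw [← hdet, hp0]; ring
        exact pow_eq_zero_iff two_ne_zero |>.mp h1
      exact ⟨0, 1, by ring, by simp [hp0], by simp [hs0], by rw [hp0] at htr; simp; linarith⟩
    · have heq : p * r = p ^ 2 + s ^ 2 := by linear_combination (-p) * htr + hdet
      have hpr : 0 < p * r := by rw [heq]; positivity
      have hpr' : 0 < p / r := by
        have h1 : p / r = (p * r) / r ^ 2 := by field_simp
        rw [h1]; positivity
      set u := Real.sqrt (p / r) with hu
      have hu2 : u ^ 2 = p / r := Real.sq_sqrt hpr'.le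
      have hu0 : 0 < u := Real.sqrt_pos.mpr hpr'
      have hru2 : r * u ^ 2 = p := by rw [hu2]; field_simp
      set v := s / (r * u) with hv
      have hrun : r * u ≠ 0 := mul_ne_zero hr0 hu0.ne'
      have h2 : s = r * (u * v) := by rw [hv]; field_simp
      have hrv2 : r * v ^ 2 = q := by
        rw [hv]; field_simp
        linear_combination (-q) * hru2 - hdet
      have huv : u ^ 2 + v ^ 2 = 1 := by
        apply mul_left_cancel₀ hr0
        linear_combination hru2 + hrv2 + htr
      exact ⟨u, v, huv, hru2.symm, h2, hrv2.symm⟩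

private lemma smul_vecMulVec (r : ℝ) (w : Fin 2 → ℝ) :
    r • Matrix.vecMulVec w w =
      !![r * (w 0 * w 0), r * (w 0 * w 1); r * (w 1 * w 0), r * (w 1 * w 1)] := by
  ext i j
  fin_cases i <;> fin_cases j <;> simp [Matrix.vecMulVec_apply]

private lemma transpose_lit (a b c d : ℝ) :
    (!![a, b; c, d] : Matrix (Fin 2) (Fin 2) ℝ)ᵀ = !![a, c; b, d] := by
  ext i j
  fin_cases i <;> fin_cases j <;> simp

/-- characterization: symmetric, det 0, trace r  ↔  `r • n⊗n` with `n` unit -/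
private lemma char_nn (r : ℝ) (M : Matrix (Fin 2) (Fin 2) ℝ) :
    (Mᵀ = M ∧ M.det = 0 ∧ M.trace = r) ↔
    (∃ n : Fin 2 → ℝ, (n 0) ^ 2 + (n 1) ^ 2 = 1 ∧ M = r • Matrix.vecMulVec n n) := by
  constructor
  · rintro ⟨hsym, hdet, htr⟩
    have hs' : M 1 0 = M 0 1 := congrFun (congrFun hsym 0) 1
    rw [Matrix.det_fin_two, hs'] at hdet
    rw [Matrix.trace_fin_two] at htr
    obtain ⟨u, v, huv, h1, h2, h3⟩ :=
      find_uv r (M 0 0) (M 1 1) (M 0 1) (by linear_combination hdet) htr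
    refine ⟨![u, v], by simpa using huv, ?_⟩
    rw [Matrix.eta_fin_two M, h1, hs', h2, h3, smul_vecMulVec]
    ext i j
    fin_cases i <;> fin_cases j <;> simp [-mul_eq_mul_left_iff] <;> ring
  · rintro ⟨n, hn, rfl⟩
    rw [smul_vecMulVec]
    refine ⟨?_, ?_, ?_⟩
    · rw [transpose_lit]
      ext i j
      fin_cases i <;> fin_cases j <;> simp [-mul_eq_mul_left_iff] <;> ring
    · rw [Matrix.det_fin_two_of]; ring
    · rw [Matrix.trace_fin_two]
      simp
      linear_combination r * hn

/-- for `Ā = a·I₂`, the minimizers of `F ↦ Q₂(F − Ā)` over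
`𝓕 = {F ∈ Sym(2) : det F = 0}` are exactly `{𝔯 n⊗n : |n| = 1}` with
`𝔯 = a(1+2β)/(1+β)`, equivalently `{ρᵀ diag(𝔯,0) ρ : ρ ∈ SO(2)}`. -/
theorem stmt4 (β a : ℝ) (hβ : -(1/2) < β)
    (Q2 : Matrix (Fin 2) (Fin 2) ℝ → ℝ)
    (hQ2 : ∀ F : Matrix (Fin 2) (Fin 2) ℝ,
      Q2 F = (∑ i, ∑ j, (((1:ℝ)/2) • (F + Fᵀ)) i j ^ 2) + β * (Matrix.trace F) ^ 2)
    (𝓕 : Set (Matrix (Fin 2) (Fin 2) ℝ))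
    (h𝓕 : 𝓕 = {F | Fᵀ = F ∧ F.det = 0})
    (Abar : Matrix (Fin 2) (Fin 2) ℝ) (hA : Abar = a • (1 : Matrix (Fin 2) (Fin 2) ℝ))
    (r : ℝ) (hr : r = a * (1 + 2 * β) / (1 + β)) :
    ({F ∈ 𝓕 | ∀ F' ∈ 𝓕, Q2 (F - Abar) ≤ Q2 (F' - Abar)} =
      {M | ∃ n : Fin 2 → ℝ, (n 0) ^ 2 + (n 1) ^ 2 = 1 ∧ M = r • Matrix.vecMulVec n n}) ∧
    ({F ∈ 𝓕 | ∀ F' ∈ 𝓕, Q2 (F - Abar) ≤ Q2 (F' - Abar)} =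
      {M | ∃ ρ : Matrix (Fin 2) (Fin 2) ℝ, ρᵀ * ρ = 1 ∧ ρ.det = 1 ∧
        M = ρᵀ * !![r, 0; 0, 0] * ρ}) := by
  have h1β : (0:ℝ) < 1 + β := by linarith
  have hrr : (1 + β) * r = a * (1 + 2 * β) := by
    rw [hr]; field_simp
  set C := (2 + 4*β) * a ^ 2 - (1 + β) * r ^ 2 with hC
  -- the key value computation
  have hQval : ∀ F : Matrix (Fin 2) (Fin 2) ℝ, Fᵀ = F → F.det = 0 →
      Q2 (F - Abar) = (1 + β) * (F.trace - r) ^ 2 + C := by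
    intro F hsym hdet
    rw [hQ2]
    have hsub : (F - Abar)ᵀ = F - Abar := by
      rw [Matrix.transpose_sub, hsym, hA, Matrix.transpose_smul, Matrix.transpose_one]
    rw [hsub]
    have h12 : ((1:ℝ)/2) • ((F - Abar) + (F - Abar)) = F - Abar := by
      rw [← two_smul ℝ, smul_smul]; norm_num
    rw [h12]
    have hs' : F 1 0 = F 0 1 := congrFun (congrFun hsym 0) 1
    rw [Matrix.det_fin_two, hs'] at hdet
    have htrace : (F - Abar).trace = F.trace - 2 * a := by
      rw [Matrix.trace_sub, hA]
      simp [Matrix.trace_smul, Matrix.trace_one]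
      ring
    rw [htrace, Matrix.trace_fin_two]
    simp only [Fin.sum_univ_two, Matrix.sub_apply, hA, Matrix.smul_apply,
      Matrix.one_apply, Fin.isValue]
    norm_num [hs']
    linear_combination (-2) * hdet + 2 * (F 0 0 + F 1 1) * hrr
  -- minimizers = symmetric, det 0, trace r
  have hSmin : {F ∈ 𝓕 | ∀ F' ∈ 𝓕, Q2 (F - Abar) ≤ Q2 (F' - Abar)} =
      {F : Matrix (Fin 2) (Fin 2) ℝ | Fᵀ = F ∧ F.det = 0 ∧ F.trace = r} := by
    have h0sym : (!![r,0;0,0] : Matrix (Fin 2) (Fin 2) ℝ)ᵀ = !![r,0;0,0] := by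
      rw [transpose_lit]
    have h0det : (!![r,0;0,0] : Matrix (Fin 2) (Fin 2) ℝ).det = 0 := by
      rw [Matrix.det_fin_two_of]; ring
    have h0tr : (!![r,0;0,0] : Matrix (Fin 2) (Fin 2) ℝ).trace = r := by
      rw [Matrix.trace_fin_two]; simp
    ext F
    simp only [h𝓕, Set.mem_setOf_eq, Set.mem_sep_iff]
    constructor
    · rintro ⟨⟨hsym, hdet⟩, hmin⟩
      refine ⟨hsym, hdet, ?_⟩
      have hle := hmin !![r,0;0,0] ⟨h0sym, h0det⟩
      rw [hQval F hsym hdet, hQval _ h0sym h0det, h0tr] at hle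
      have h1 : (F.trace - r) ^ 2 = 0 := by
        refine le_antisymm ?_ (sq_nonneg _)
        nlinarith [hle]
      have h2 : F.trace - r = 0 := pow_eq_zero_iff two_ne_zero |>.mp h1
      linarith
    · rintro ⟨hsym, hdet, htr⟩
      refine ⟨⟨hsym, hdet⟩, ?_⟩
      rintro F' ⟨hsym', hdet'⟩
      rw [hQval F hsym hdet, hQval F' hsym' hdet', htr]
      nlinarith [mul_nonneg h1β.le (sq_nonneg (F'.trace - r))]
  constructor
  · rw [hSmin]
    ext M
    simp only [Set.mem_setOf_eq]
    exact char_nn r M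
  · rw [hSmin]
    ext M
    simp only [Set.mem_setOf_eq]
    constructor
    · intro hM
      obtain ⟨n, hn, rfl⟩ := (char_nn r M).mp hM
      refine ⟨!![n 0, n 1; -(n 1), n 0], ?_, ?_, ?_⟩
      · rw [transpose_lit, Matrix.mul_fin_two, Matrix.one_fin_two]
        ext i j
        fin_cases i <;> fin_cases j <;> simp <;> linarith [hn]
      · rw [Matrix.det_fin_two_of]
        linear_combination hn
      · rw [transpose_lit, Matrix.mul_fin_two, Matrix.mul_fin_two, smul_vecMulVec]
        ext i j
        fin_cases i <;> fin_cases j <;> simp [-mul_eq_mul_left_iff] <;> ring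
    · rintro ⟨ρ, hρ1, hρdet, rfl⟩
      have hρρ : ρ * ρᵀ = 1 := by
        rw [mul_eq_one_comm] at hρ1; exact hρ1
      refine ⟨?_, ?_, ?_⟩
      · have hD : (!![r, 0; 0, 0] : Matrix (Fin 2) (Fin 2) ℝ)ᵀ = !![r, 0; 0, 0] := by
          rw [transpose_lit]
        rw [Matrix.transpose_mul, Matrix.transpose_mul, Matrix.transpose_transpose, hD,
          Matrix.mul_assoc]
      · rw [Matrix.det_mul, Matrix.det_mul]
        have h0 : (!![r, 0; 0, 0] : Matrix (Fin 2) (Fin 2) ℝ).det = 0 := by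
          rw [Matrix.det_fin_two_of]; ring
        rw [h0]; ring
      · rw [Matrix.trace_mul_comm, ← Matrix.mul_assoc, hρρ, Matrix.one_mul,
          Matrix.trace_fin_two]
        simp
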